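/- Let D ≥ 1 and for each d = 1, …, D let n_d ≥ 1, N_d = 2^{n_d}, h_d > 0, and let L̃^{(N_d)}_{b_d} be the scaled one-dimensional Laplacian of size N_d with boundary condition b_d ∈ {periodic, Dirichlet, Neumann}. Set ω_d = (1/h_d²)/(Σ_{i=1}^D 1/h_i²), M = N_D N_{D−1} ⋯ N_1, and define the scaled D-dimensional Laplacian L̃^{(D)} = Σ_{d=1}^D (I_{N_D} ⊗ ⋯ ⊗ I_{N_{d+1}}) ⊗ ω_d L̃^{(N_d)}_{b_d} ⊗ (I_{N_{d−1}} ⊗ ⋯ ⊗ I_{N_1}). Suppose for each d that V_d is a unitary on ℂ^{2^3} ⊗ ℂ^M that is a (1, 3, 0)-block encoding of (I_{N_D} ⊗ ⋯ ⊗ I_{N_{d+1}}) ⊗ L̃^{(N_d)}_{b_d} ⊗ (I_{N_{d−1}} ⊗ ⋯ ⊗ I_{N_1}). Let K = 2^{⌈log₂ D⌉} with standard basis f_1, …, f_K of ℂ^K, let W be any K×K unitary with W f_1 = Σ_{d=1}^D √ω_d f_d, and define SEL = Σ_{d=1}^D f_d f_d^* ⊗ V_d + Σ_{d=D+1}^K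 f_d f_d^* ⊗ I_{2^3 M}. Then U = (W^† ⊗ I_{2^3 M}) · SEL · (W ⊗ I_{2^3 M}) is unitary and is an exact (1, 3 + ⌈log₂ D⌉, 0)-block encoding of L̃^{(D)}, with ancilla space ℂ^K ⊗ ℂ^{2^3}. -/

import Mathlib

open Matrix

noncomputable section

instance instNeZeroPow2 (n : ℕ) : NeZero (2 ^ n) := ⟨pow_ne_zero n two_ne_zero⟩

/-- Cyclic left shift: `Sm • e_j = e_{j-1 mod N}`, i.e. `(Sm)_{i j} = [i = j - 1]`. -/
def Sm (N : ℕ) [NeZero N] : Matrix (Fin N) (Fin N) ℂ :=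
  Matrix.of fun i j => if i = j - 1 then 1 else 0

/-- Cyclic right shift: `Sp • e_j = e_{j+1 mod N}`. -/
def Sp (N : ℕ) [NeZero N] : Matrix (Fin N) (Fin N) ℂ :=
  Matrix.of fun i j => if i = j + 1 then 1 else 0

/-- The index `N - 1` of the last grid point. -/
def fLast (N : ℕ) [NeZero N] : Fin N := ⟨N - 1, Nat.sub_lt (Nat.pos_of_neZero N) Nat.one_pos⟩

/-- The scaled 1D periodic Laplacian `L̃_p = (1/4)(S⁻ + S⁺ − 2 I)`. -/
def Lper (N : ℕ) [NeZero N] : Matrix (Fin N) (Fin N) ℂ :=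
  (1 / 4 : ℂ) • (Sm N + Sp N - (2 : ℂ) • (1 : Matrix (Fin N) (Fin N) ℂ))

/-- The scaled 1D Dirichlet Laplacian `L̃_d = L̃_p − (1/4)(e₀e_{N−1}ᵀ + e_{N−1}e₀ᵀ)`. -/
def Ldir (N : ℕ) [NeZero N] : Matrix (Fin N) (Fin N) ℂ :=
  Lper N - (1 / 4 : ℂ) •
    (Matrix.single (0 : Fin N) (fLast N) (1 : ℂ) +
     Matrix.single (fLast N) (0 : Fin N) (1 : ℂ))

/-- The scaled 1D Neumann Laplacian `L̃_n = L̃_d + (1/4)(e₀e₀ᵀ + e_{N−1}e_{N−1}ᵀ)`. -/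
def Lneu (N : ℕ) [NeZero N] : Matrix (Fin N) (Fin N) ℂ :=
  Ldir N + (1 / 4 : ℂ) •
    (Matrix.single (0 : Fin N) (0 : Fin N) (1 : ℂ) +
     Matrix.single (fLast N) (fLast N) (1 : ℂ))
open scoped Kronecker

/-- Boundary conditions for the discrete Laplacian. -/
inductive BC
  | periodic
  | dirichlet
  | neumann

/-- The scaled 1D Laplacian with the given boundary condition. -/
def Lbc (N : ℕ) [NeZero N] : BC → Matrix (Fin N) (Fin N) ℂ
  | .periodic => Lper N
  | .dirichlet => Ldir N
  | .neumann => Lneu N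

/-- The factor `(I_{N_D} ⊗ ⋯ ⊗ I_{N_{d+1}}) ⊗ A ⊗ (I_{N_{d−1}} ⊗ ⋯ ⊗ I_{N_1})` of a Kronecker
sum: the operator acting as `A` on the `d`-th coordinate of the grid and as the identity on all
other coordinates. -/
def dimOp {D : ℕ} (Nf : Fin D → ℕ) (d : Fin D)
    (A : Matrix (Fin (Nf d)) (Fin (Nf d)) ℂ) :
    Matrix ((k : Fin D) → Fin (Nf k)) ((k : Fin D) → Fin (Nf k)) ℂ :=
  Matrix.of fun x y => if ∀ k, k ≠ d → x k = y k then A (x d) (y d) else 0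

/-- The select operator
`SEL = Σ_{d<D} f_d f_d^* ⊗ V_d + Σ_{D ≤ d < K} f_d f_d^* ⊗ I`. -/
def SEL {K : ℕ} {β : Type*} [Fintype β] [DecidableEq β] (D : ℕ) (hDK : D ≤ K)
    (V : Fin D → Matrix β β ℂ) : Matrix (Fin K × β) (Fin K × β) ℂ :=
  (∑ d : Fin D,
      Matrix.single (Fin.castLE hDK d) (Fin.castLE hDK d) (1 : ℂ) ⊗ₖ V d) +
  ∑ k ∈ Finset.univ.filter fun k : Fin K => D ≤ (k : ℕ),
      Matrix.single k k (1 : ℂ) ⊗ₖ (1 : Matrix β β ℂ)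

/-- `U = (W† ⊗ I) · SEL · (W ⊗ I)`. -/
def lcuU {K : ℕ} {β : Type*} [Fintype β] [DecidableEq β] (D : ℕ) (hDK : D ≤ K)
    (V : Fin D → Matrix β β ℂ) (W : Matrix (Fin K) (Fin K) ℂ) :
    Matrix (Fin K × β) (Fin K × β) ℂ :=
  (Wᴴ ⊗ₖ (1 : Matrix β β ℂ)) * SEL D hDK V * (W ⊗ₖ (1 : Matrix β β ℂ))


section LCUaux

variable {K : ℕ} {β : Type*} [Fintype β] [DecidableEq β]

/-- The `k`-th diagonal block of `SEL`. -/
def blockOf (D : ℕ) (V : Fin D → Matrix β β ℂ) (k : Fin K) : Matrix β β ℂ :=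
  if h : (k : ℕ) < D then V ⟨k, h⟩ else 1

lemma SEL_apply (D : ℕ) (hDK : D ≤ K) (V : Fin D → Matrix β β ℂ)
    (k l : Fin K) (x y : β) :
    SEL D hDK V (k, x) (l, y) = if k = l then blockOf D V k x y else 0 := by
  classical
  simp only [SEL, Matrix.add_apply, Matrix.sum_apply, Matrix.kroneckerMap_apply,
    Matrix.single, Matrix.of_apply]
  rcases eq_or_ne k l with rfl | hkl
  · by_cases hk : (k : ℕ) < D
    · rw [if_pos rfl, Finset.sum_eq_single (⟨(k : ℕ), hk⟩ : Fin D)]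
      · have hcast : Fin.castLE hDK (⟨(k : ℕ), hk⟩ : Fin D) = k := rfl
        rw [hcast, if_pos ⟨rfl, rfl⟩, one_mul, Finset.sum_eq_zero, add_zero]
        · simp [blockOf, hk]
        · intro k' hk'
          rw [Finset.mem_filter] at hk'
          have : k' ≠ k := by
            intro h; subst h; omega
          rw [if_neg (by tauto), zero_mul]
      · intro b _ hb
        have : Fin.castLE hDK b ≠ k := by
          intro h
          apply hb
          apply Fin.ext
          simpa using congrArg Fin.val h
        rw [if_neg (by tauto), zero_mul]
      · intro hmem; exact absurd (Finset.mem_univ _) hmem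
    · rw [if_pos rfl, Finset.sum_eq_zero, zero_add,
        Finset.sum_eq_single_of_mem k]
      · rw [if_pos ⟨rfl, rfl⟩, one_mul]
        simp [blockOf, hk]
      · simp only [Finset.mem_filter, Finset.mem_univ, true_and]; omega
      · intro b _ hb; rw [if_neg (by tauto), zero_mul]
      · intro b _
        have : Fin.castLE hDK b ≠ k := by
          intro h
          have := congrArg Fin.val h
          simp at this
          omega
        rw [if_neg (by tauto), zero_mul]
  · rw [if_neg hkl, Finset.sum_eq_zero, Finset.sum_eq_zero, add_zero]
    · intro b _
      have : ¬ (b = k ∧ b = l) := by rintro ⟨rfl, rfl⟩; exact hkl rfl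
      rw [if_neg this, zero_mul]
    · intro b _
      have : ¬ (Fin.castLE hDK b = k ∧ Fin.castLE hDK b = l) := by
        rintro ⟨rfl, h2⟩; exact hkl h2
      rw [if_neg this, zero_mul]

lemma SEL_mem_unitaryGroup (D : ℕ) (hDK : D ≤ K) (V : Fin D → Matrix β β ℂ)
    (hV : ∀ d, V d ∈ Matrix.unitaryGroup β ℂ) :
    SEL D hDK V ∈ Matrix.unitaryGroup (Fin K × β) ℂ := by
  classical
  rw [Matrix.mem_unitaryGroup_iff]
  have hB : ∀ k : Fin K, blockOf D V k * (blockOf D V k)ᴴ = 1 := by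
    intro k
    unfold blockOf
    split
    · rw [← Matrix.star_eq_conjTranspose]
      exact Matrix.mem_unitaryGroup_iff.mp (hV _)
    · simp
  ext ⟨k, x⟩ ⟨l, y⟩
  rw [Matrix.mul_apply, Fintype.sum_prod_type]
  simp only [Matrix.star_eq_conjTranspose, Matrix.conjTranspose_apply, SEL_apply]
  rcases eq_or_ne k l with rfl | hkl
  · rw [Finset.sum_eq_single k]
    · have := congrFun (congrFun (hB k) x) y
      rw [Matrix.mul_apply] at this
      simp only [Matrix.conjTranspose_apply] at this
      simp only [eq_self_iff_true, if_true]
      rw [this]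
      simp [Matrix.one_apply, Prod.ext_iff]
    · intro m _ hm
      rw [Finset.sum_eq_zero]
      intro z _
      rw [if_neg (Ne.symm hm), zero_mul]
    · intro h; exact absurd (Finset.mem_univ _) h
  · rw [Finset.sum_eq_zero]
    · simp [Matrix.one_apply, Prod.ext_iff, hkl]
    · intro m _
      rcases eq_or_ne k m with rfl | hkm
      · rw [Finset.sum_eq_zero]
        intro z _
        rw [if_neg (Ne.symm hkl), star_zero, mul_zero]
      · rw [Finset.sum_eq_zero]
        intro z _
        rw [if_neg hkm, zero_mul]

lemma kron_one_mem_unitaryGroup [Fintype β] (A : Matrix (Fin K) (Fin K) ℂ)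
    (hA : A ∈ Matrix.unitaryGroup (Fin K) ℂ) :
    (A ⊗ₖ (1 : Matrix β β ℂ)) ∈ Matrix.unitaryGroup (Fin K × β) ℂ := by
  rw [Matrix.mem_unitaryGroup_iff]
  have h1 : star (A ⊗ₖ (1 : Matrix β β ℂ)) = (Aᴴ ⊗ₖ (1 : Matrix β β ℂ)) := by
    ext ⟨i, u⟩ ⟨j, v⟩
    simp only [Matrix.star_eq_conjTranspose, Matrix.conjTranspose_apply,
      Matrix.kroneckerMap_apply, Matrix.one_apply]
    by_cases huv : u = v
    · subst huv; simp
    · simp [huv, Ne.symm huv]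
  have hAA : A * Aᴴ = 1 := by
    rw [← Matrix.star_eq_conjTranspose]
    exact Matrix.mem_unitaryGroup_iff.mp hA
  rw [h1, ← Matrix.mul_kronecker_mul, hAA, Matrix.one_mul, Matrix.one_kronecker_one]

lemma lcuU_submatrix_apply [NeZero K] (D : ℕ) (hDK : D ≤ K)
    (V : Fin D → Matrix β β ℂ) (W : Matrix (Fin K) (Fin K) ℂ) (x y : β) :
    lcuU D hDK V W ((0 : Fin K), x) ((0 : Fin K), y) =
      ∑ k : Fin K, star (W k 0) * W k 0 * blockOf D V k x y := by
  classical
  unfold lcuU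
  rw [Matrix.mul_apply, Fintype.sum_prod_type]
  have step : ∀ m : Fin K, ∀ z : β,
      ((Wᴴ ⊗ₖ (1 : Matrix β β ℂ)) * SEL D hDK V) ((0 : Fin K), x) (m, z) =
        star (W m 0) * blockOf D V m x z := by
    intro m z
    rw [Matrix.mul_apply, Fintype.sum_prod_type]
    rw [Finset.sum_eq_single m]
    · rw [Finset.sum_eq_single x]
      · simp [Matrix.kroneckerMap_apply, SEL_apply, Matrix.conjTranspose_apply,
          Matrix.one_apply]
      · intro w _ hw
        simp [Matrix.kroneckerMap_apply, Matrix.one_apply, hw.symm]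
      · intro h; exact absurd (Finset.mem_univ _) h
    · intro b _ hb
      rw [Finset.sum_eq_zero]
      intro w _
      simp [Matrix.kroneckerMap_apply, SEL_apply, hb]
    · intro h; exact absurd (Finset.mem_univ _) h
  calc ∑ m : Fin K, ∑ z : β,
        ((Wᴴ ⊗ₖ (1 : Matrix β β ℂ)) * SEL D hDK V) ((0 : Fin K), x) (m, z) *
          (W ⊗ₖ (1 : Matrix β β ℂ)) (m, z) ((0 : Fin K), y)
      = ∑ m : Fin K, ∑ z : β,
          (star (W m 0) * blockOf D V m x z) * (W m 0 * (if z = y then 1 else 0)) := by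
        refine Finset.sum_congr rfl fun m _ => Finset.sum_congr rfl fun z _ => ?_
        rw [step m z]
        simp [Matrix.kroneckerMap_apply, Matrix.one_apply]
    _ = ∑ k : Fin K, star (W k 0) * W k 0 * blockOf D V k x y := by
        refine Finset.sum_congr rfl fun m _ => ?_
        rw [Finset.sum_eq_single y]
        · rw [if_pos rfl]; ring
        · intro z _ hz; rw [if_neg hz, mul_zero, mul_zero]
        · intro h; exact absurd (Finset.mem_univ _) h

lemma sum_fin_dite {M : Type*} [AddCommMonoid M] {D K : ℕ} (hDK : D ≤ K)
    (g : Fin D → M) :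
    (∑ k : Fin K, if hk : (k : ℕ) < D then g ⟨(k : ℕ), hk⟩ else 0) = ∑ d : Fin D, g d := by
  rw [Fin.sum_univ_eq_sum_range (fun i => if hi : i < D then g ⟨i, hi⟩ else 0) K]
  rw [← Finset.sum_subset (Finset.range_subset_range.mpr hDK)
    (fun i _ hi => dif_neg (by simpa using hi))]
  rw [← Fin.sum_univ_eq_sum_range (fun i => if hi : i < D then g ⟨i, hi⟩ else 0) D]
  exact Finset.sum_congr rfl fun d _ => by rw [dif_pos d.isLt]

end LCUaux

/-- Block encoding of the scaled `D`-dimensional Laplacian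
`L̃^{(D)} = Σ_d ω_d · (I ⊗ ⋯ ⊗ L̃^{(N_d)}_{b_d} ⊗ ⋯ ⊗ I)` from `(1,3,0)`-block encodings `V_d` of
the one-dimensional factors: `U = (W† ⊗ I) · SEL · (W ⊗ I)` is unitary and is an exact
`(1, 3 + ⌈log₂ D⌉, 0)`-block encoding of `L̃^{(D)}`. -/
theorem ddim_laplacian_block_encoding (D : ℕ) (hD : 1 ≤ D)
    (nd : Fin D → ℕ) (hnd : ∀ d, 1 ≤ nd d)
    (h : Fin D → ℝ) (hh : ∀ d, 0 < h d)
    (b : Fin D → BC)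
    (ω : Fin D → ℝ) (hω : ∀ d, ω d = (1 / (h d) ^ 2) / ∑ i, 1 / (h i) ^ 2)
    (V : Fin D →
      Matrix (Fin (2 ^ 3) × ((k : Fin D) → Fin (2 ^ nd k)))
        (Fin (2 ^ 3) × ((k : Fin D) → Fin (2 ^ nd k))) ℂ)
    (hVU : ∀ d, V d ∈
      Matrix.unitaryGroup (Fin (2 ^ 3) × ((k : Fin D) → Fin (2 ^ nd k))) ℂ)
    (hVbe : ∀ d, (V d).submatrix
        (fun x : (k : Fin D) → Fin (2 ^ nd k) => ((0 : Fin (2 ^ 3)), x))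
        (fun y : (k : Fin D) → Fin (2 ^ nd k) => ((0 : Fin (2 ^ 3)), y))
      = dimOp (fun k => 2 ^ nd k) d (Lbc (2 ^ nd d) (b d)))
    (W : Matrix (Fin (2 ^ Nat.clog 2 D)) (Fin (2 ^ Nat.clog 2 D)) ℂ)
    (hWU : W ∈ Matrix.unitaryGroup (Fin (2 ^ Nat.clog 2 D)) ℂ)
    (hW : W.mulVec (Pi.single (0 : Fin (2 ^ Nat.clog 2 D)) 1) =
      fun k : Fin (2 ^ Nat.clog 2 D) =>
        if hk : (k : ℕ) < D then ((Real.sqrt (ω ⟨k, hk⟩) : ℝ) : ℂ) else 0) :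
    lcuU D (Nat.le_pow_clog one_lt_two D) V W ∈
      Matrix.unitaryGroup
        (Fin (2 ^ Nat.clog 2 D) × Fin (2 ^ 3) × ((k : Fin D) → Fin (2 ^ nd k))) ℂ ∧
    (lcuU D (Nat.le_pow_clog one_lt_two D) V W).submatrix
        (fun x : (k : Fin D) → Fin (2 ^ nd k) =>
          ((0 : Fin (2 ^ Nat.clog 2 D)), (0 : Fin (2 ^ 3)), x))
        (fun y : (k : Fin D) → Fin (2 ^ nd k) =>
          ((0 : Fin (2 ^ Nat.clog 2 D)), (0 : Fin (2 ^ 3)), y))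
      = ∑ d, ((ω d : ℂ) • dimOp (fun k => 2 ^ nd k) d (Lbc (2 ^ nd d) (b d))) := by
  classical
  have hDK := Nat.le_pow_clog (one_lt_two) D
  haveI : Nonempty (Fin D) := ⟨⟨0, hD⟩⟩
  have hω0 : ∀ d, (0 : ℝ) ≤ ω d := by
    intro d
    rw [hω d]
    have hpos : ∀ i : Fin D, (0 : ℝ) < 1 / (h i) ^ 2 := by
      intro i
      have := hh i
      positivity
    have hsum : 0 < ∑ i, 1 / (h i) ^ 2 :=
      Finset.sum_pos (fun i _ => hpos i) Finset.univ_nonempty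
    exact div_nonneg (hpos d).le hsum.le
  have hW' : ∀ k, W k 0 =
      if hk : (k : ℕ) < D then ((Real.sqrt (ω ⟨(k : ℕ), hk⟩) : ℝ) : ℂ) else 0 := by
    intro k
    have := congrFun hW k
    rw [Matrix.mulVec_single] at this
    simpa using this
  have hVapp : ∀ (d : Fin D) x y,
      V d ((0 : Fin (2 ^ 3)), x) ((0 : Fin (2 ^ 3)), y) =
        dimOp (fun k => 2 ^ nd k) d (Lbc (2 ^ nd d) (b d)) x y := by
    intro d x y
    have := congrFun (congrFun (hVbe d) x) y
    simpa [Matrix.submatrix_apply] using this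
  constructor
  · unfold lcuU
    have hWH : Wᴴ ∈ Matrix.unitaryGroup (Fin (2 ^ Nat.clog 2 D)) ℂ := by
      have := Unitary.star_mem hWU
      rwa [Matrix.star_eq_conjTranspose] at this
    exact mul_mem (mul_mem (kron_one_mem_unitaryGroup _ hWH)
      (SEL_mem_unitaryGroup _ _ _ hVU)) (kron_one_mem_unitaryGroup _ hWU)
  · ext x y
    rw [Matrix.submatrix_apply, lcuU_submatrix_apply, Matrix.sum_apply]
    calc ∑ k : Fin (2 ^ Nat.clog 2 D),
          star (W k 0) * W k 0 *
            blockOf D V k ((0 : Fin (2 ^ 3)), x) ((0 : Fin (2 ^ 3)), y)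
        = ∑ k : Fin (2 ^ Nat.clog 2 D),
            if hk : (k : ℕ) < D then
              ((ω ⟨(k : ℕ), hk⟩ : ℝ) : ℂ) *
                dimOp (fun k => 2 ^ nd k) ⟨(k : ℕ), hk⟩
                  (Lbc (2 ^ nd ⟨(k : ℕ), hk⟩) (b ⟨(k : ℕ), hk⟩)) x y
            else 0 := by
          refine Finset.sum_congr rfl fun k _ => ?_
          rw [hW' k]
          by_cases hk : (k : ℕ) < D
          · rw [dif_pos hk, dif_pos hk]
            unfold blockOf
            rw [dif_pos hk, hVapp]
            simp only [Complex.star_def, Complex.conj_ofReal, ← Complex.ofReal_mul,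
              Real.mul_self_sqrt (hω0 ⟨(k : ℕ), hk⟩)]
          · rw [dif_neg hk, dif_neg hk]
            simp
      _ = ∑ d : Fin D, ((ω d : ℝ) : ℂ) *
            dimOp (fun k => 2 ^ nd k) d (Lbc (2 ^ nd d) (b d)) x y :=
          sum_fin_dite hDK fun d => ((ω d : ℝ) : ℂ) *
            dimOp (fun k => 2 ^ nd k) d (Lbc (2 ^ nd d) (b d)) x y
      _ = ∑ d : Fin D,
            (((ω d : ℝ) : ℂ) • dimOp (fun k => 2 ^ nd k) d (Lbc (2 ^ nd d) (b d))) x y := by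
          refine Finset.sum_congr rfl fun d _ => ?_
          rw [Matrix.smul_apply, smul_eq_mul]
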